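/- For every real r with 2 < r < 3, there exists a unique t_2 ∈ (0,1) satisfying r − 2 − t_2 = (1+t_2)^{r−1}(1−t_2)/(1 − t_2^r) − 1, and moreover r − 2 − t_2 > 0 (equivalently, a_2(r) = (r − 2 − t_2)/r > 0). -/

import Mathlib

open Real Set

private lemma auxQ {r t : ℝ} (hr1 : 2 < r) (hr2 : r < 3) (ht0 : 0 < t) (ht1 : t < 1) :
    (r - 1) * t ^ (r - 2) - (r - 2) * t ^ (r - 1) < 1 := by
  set Q : ℝ → ℝ := fun x => (r - 1) * x ^ (r - 2) - (r - 2) * x ^ (r - 1) with hQdef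
  have hcont : ContinuousOn Q (Icc t 1) := by
    apply ContinuousOn.sub
    · exact continuousOn_const.mul (continuousOn_id.rpow_const fun x hx => Or.inr (by linarith))
    · exact continuousOn_const.mul (continuousOn_id.rpow_const fun x hx => Or.inr (by linarith))
  have hmono : StrictMonoOn Q (Icc t 1) := by
    apply strictMonoOn_of_deriv_pos (convex_Icc t 1) hcont
    intro x hx
    rw [interior_Icc] at hx
    have hx0 : 0 < x := lt_trans ht0 hx.1
    have hd : HasDerivAt Q ((r - 1) * (1 * (r - 2) * x ^ (r - 2 - 1)) -
        (r - 2) * (1 * (r - 1) * x ^ (r - 1 - 1))) x := by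
      exact (((hasDerivAt_id x).rpow_const (Or.inl hx0.ne')).const_mul (r - 1)).sub
        (((hasDerivAt_id x).rpow_const (Or.inl hx0.ne')).const_mul (r - 2))
    rw [hd.deriv]
    have h1 : x ^ (r - 2) < x ^ (r - 3) :=
      rpow_lt_rpow_of_exponent_gt hx0 hx.2 (by linarith)
    have e1 : r - 2 - 1 = r - 3 := by ring
    have e2 : r - 1 - 1 = r - 2 := by ring
    rw [e1, e2]
    have hpos : 0 < (r - 1) * (r - 2) := by nlinarith
    nlinarith
  have h := hmono (left_mem_Icc.mpr ht1.le) (right_mem_Icc.mpr ht1.le) ht1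
  simp only [hQdef, Real.one_rpow] at h
  linarith

private lemma auxP {r t : ℝ} (hr1 : 2 < r) (hr2 : r < 3) (ht0 : 0 < t) (ht1 : t < 1) :
    0 < (r - 2) - r * t + r * t ^ (r - 1) - (r - 2) * t ^ r := by
  set P : ℝ → ℝ := fun x => (r - 2) - r * x + r * x ^ (r - 1) - (r - 2) * x ^ r with hPdef
  have hcont : ContinuousOn P (Icc t 1) := by
    apply ContinuousOn.sub
    apply ContinuousOn.add
    apply ContinuousOn.sub continuousOn_const (continuousOn_const.mul continuousOn_id)
    · exact continuousOn_const.mul (continuousOn_id.rpow_const fun x hx => Or.inr (by linarith))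
    · exact continuousOn_const.mul (continuousOn_id.rpow_const fun x hx => Or.inr (by linarith))
  have hanti : StrictAntiOn P (Icc t 1) := by
    apply strictAntiOn_of_deriv_neg (convex_Icc t 1) hcont
    intro x hx
    rw [interior_Icc] at hx
    have hx0 : 0 < x := lt_trans ht0 hx.1
    have hd : HasDerivAt P (0 - r * 1 + r * (1 * (r - 1) * x ^ (r - 1 - 1)) -
        (r - 2) * (1 * r * x ^ (r - 1))) x := by
      apply HasDerivAt.sub
      apply HasDerivAt.add
      apply HasDerivAt.sub (hasDerivAt_const x (r - 2)) ((hasDerivAt_id x).const_mul r)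
      · exact ((hasDerivAt_id x).rpow_const (Or.inl hx0.ne')).const_mul r
      · have : HasDerivAt (fun y : ℝ => y ^ r) (1 * r * x ^ (r - 1)) x :=
          (hasDerivAt_id x).rpow_const (Or.inl hx0.ne')
        exact this.const_mul (r - 2)
    rw [hd.deriv]
    have hQ := auxQ hr1 hr2 (lt_trans ht0 hx.1) hx.2
    have e2 : r - 1 - 1 = r - 2 := by ring
    rw [e2]
    nlinarith
  have := hanti (left_mem_Icc.mpr ht1.le) (right_mem_Icc.mpr ht1.le) ht1
  simp only [hPdef, Real.one_rpow] at this
  linarith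

private lemma gDeriv {r t : ℝ} (hr1 : 2 < r) (hr2 : r < 3) (ht0 : 0 < t) (ht1 : t < 1) :
    HasDerivAt (fun x : ℝ => (1 + x) ^ (r - 1) * (1 - x) / (1 - x ^ r))
      ((1 + t) ^ (r - 2) * ((r - 2) - r * t + r * t ^ (r - 1) - (r - 2) * t ^ r) /
        (1 - t ^ r) ^ 2) t := by
  have h1t : (0:ℝ) < 1 + t := by linarith
  have hDpos : 0 < 1 - t ^ r := by
    have : t ^ r < 1 := rpow_lt_one ht0.le ht1 (by linarith)
    linarith
  have h1 : HasDerivAt (fun x : ℝ => (1 + x) ^ (r - 1))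
      (1 * (r - 1) * (1 + t) ^ (r - 1 - 1)) t :=
    ((hasDerivAt_id t).const_add 1).rpow_const (Or.inl h1t.ne')
  have h2 : HasDerivAt (fun x : ℝ => 1 - x) (-1) t := by
    simpa using (hasDerivAt_id t).const_sub 1
  have hN := h1.mul h2
  have h3 : HasDerivAt (fun x : ℝ => 1 - x ^ r) (-(1 * r * t ^ (r - 1))) t :=
    ((hasDerivAt_id t).rpow_const (Or.inl ht0.ne')).const_sub 1
  have hg := hN.div h3 hDpos.ne'
  refine hg.congr_deriv ?_
  simp only [Pi.mul_apply]
  have e0 : r - 1 - 1 = r - 2 := by ring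
  have e1 : (1 + t) ^ (r - 1) = (1 + t) ^ (r - 2) * (1 + t) := by
    rw [show r - 1 = r - 2 + 1 by ring, Real.rpow_add_one h1t.ne']
  have e2 : t ^ r = t ^ (r - 1) * t := by
    have h := Real.rpow_add_one ht0.ne' (r - 1)
    rw [show r - 1 + 1 = r by ring] at h
    exact h
  rw [e0, e1, e2]
  generalize t ^ (r - 1) = B
  generalize (1 + t) ^ (r - 2) = A
  ring

theorem stmt_3 (r : ℝ) (hr1 : 2 < r) (hr2 : r < 3) :
    ∃ t₂ : ℝ, t₂ ∈ Set.Ioo (0 : ℝ) 1 ∧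
      r - 2 - t₂ = (1 + t₂) ^ (r - 1) * (1 - t₂) / (1 - t₂ ^ r) - 1 ∧
      0 < r - 2 - t₂ ∧
      ∀ t : ℝ, t ∈ Set.Ioo (0 : ℝ) 1 →
        r - 2 - t = (1 + t) ^ (r - 1) * (1 - t) / (1 - t ^ r) - 1 →
        t = t₂ := by
  set g : ℝ → ℝ := fun x => (1 + x) ^ (r - 1) * (1 - x) / (1 - x ^ r) with hgdef
  set F : ℝ → ℝ := fun x => r - 1 - x - g x with hFdef
  -- denominator nonzero on Ico 0 1
  have hDpos : ∀ x ∈ Ico (0:ℝ) 1, 0 < 1 - x ^ r := by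
    intro x hx
    have : x ^ r < 1 := rpow_lt_one hx.1 hx.2 (by linarith)
    linarith
  have hg_cont : ContinuousOn g (Ico 0 1) := by
    apply ContinuousOn.div
    · exact ((continuousOn_const.add continuousOn_id).rpow_const
        fun x hx => Or.inr (by linarith)).mul (continuousOn_const.sub continuousOn_id)
    · exact continuousOn_const.sub (continuousOn_id.rpow_const fun x hx => Or.inr (by linarith))
    · exact fun x hx => (hDpos x hx).ne'
  have hF_cont : ContinuousOn F (Ico 0 1) :=
    (continuousOn_const.sub continuousOn_id).sub hg_cont
  have hg_mono : StrictMonoOn g (Ico 0 1) := by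
    apply strictMonoOn_of_deriv_pos (convex_Ico 0 1) hg_cont
    intro x hx
    rw [interior_Ico] at hx
    rw [(gDeriv hr1 hr2 hx.1 hx.2).deriv]
    have hP := auxP hr1 hr2 hx.1 hx.2
    have h1t : (0:ℝ) < 1 + x := by linarith [hx.1]
    have hD := hDpos x ⟨hx.1.le, hx.2⟩
    exact div_pos (mul_pos (rpow_pos_of_pos h1t _) hP) (by positivity)
  have hF_anti : StrictAntiOn F (Ico 0 1) := by
    apply strictAntiOn_of_deriv_neg (convex_Ico 0 1) hF_cont
    intro x hx
    rw [interior_Ico] at hx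
    have hd : HasDerivAt F (-1 - ((1 + x) ^ (r - 2) *
        ((r - 2) - r * x + r * x ^ (r - 1) - (r - 2) * x ^ r) / (1 - x ^ r) ^ 2)) x := by
      have := ((hasDerivAt_id x).const_sub (r - 1)).sub (gDeriv hr1 hr2 hx.1 hx.2)
      simp at this
      exact this
    rw [hd.deriv]
    have hP := auxP hr1 hr2 hx.1 hx.2
    have h1t : (0:ℝ) < 1 + x := by linarith [hx.1]
    have hD := hDpos x ⟨hx.1.le, hx.2⟩
    have : 0 < (1 + x) ^ (r - 2) *
        ((r - 2) - r * x + r * x ^ (r - 1) - (r - 2) * x ^ r) / (1 - x ^ r) ^ 2 :=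
      div_pos (mul_pos (rpow_pos_of_pos h1t _) hP) (by positivity)
    linarith
  have hg0 : g 0 = 1 := by
    simp [hgdef, Real.zero_rpow (by linarith : r ≠ 0), Real.one_rpow]
  have hF0 : F 0 = r - 2 := by
    simp only [hFdef, hg0]; ring
  -- the point c where F is negative
  set c : ℝ := ((r ^ 2 - r - 1) / (2 * r - 1) + 1) / 2 with hcdef
  have h2r : (0:ℝ) < 2 * r - 1 := by linarith
  have hq0 : 0 < (r ^ 2 - r - 1) / (2 * r - 1) := div_pos (by nlinarith) h2r
  have hq1 : (r ^ 2 - r - 1) / (2 * r - 1) < 1 := (div_lt_one h2r).mpr (by nlinarith)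
  have hc0 : 0 < c := by rw [hcdef]; linarith
  have hc1 : c < 1 := by rw [hcdef]; linarith
  have hkey : r ^ 2 - r - 1 < c * (2 * r - 1) := by
    have : (r ^ 2 - r - 1) / (2 * r - 1) < c := by rw [hcdef]; linarith
    calc r ^ 2 - r - 1 = (r ^ 2 - r - 1) / (2 * r - 1) * (2 * r - 1) := by
          rw [div_mul_cancel₀ _ h2r.ne']
      _ < c * (2 * r - 1) := by
          exact mul_lt_mul_of_pos_right this h2r
  have hDc : 0 < 1 - c ^ r := hDpos c ⟨hc0.le, hc1⟩
  have h1c : 0 < 1 - c := by linarith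
  -- Bernoulli bounds
  have hb1 : 1 + (r - 1) * c ≤ (1 + c) ^ (r - 1) :=
    one_add_mul_self_le_rpow_one_add (by linarith) (by linarith)
  have hb2 : 1 - c ^ r ≤ r * (1 - c) := by
    have h := one_add_mul_self_le_rpow_one_add (show (-1:ℝ) ≤ c - 1 by linarith)
      (show (1:ℝ) ≤ r by linarith)
    rw [show (1:ℝ) + (c - 1) = c by ring] at h
    nlinarith
  have hgc : (1 + (r - 1) * c) / r ≤ g c := by
    have heq : (1 + (r - 1) * c) / r = (1 + (r - 1) * c) * (1 - c) / (r * (1 - c)) := by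
      rw [mul_div_mul_right _ _ h1c.ne']
    rw [heq, hgdef]
    apply div_le_div₀ (by positivity)
    · exact mul_le_mul_of_nonneg_right hb1 h1c.le
    · exact hDc
    · exact hb2
  have hFc : F c < 0 := by
    have h1 : r - 1 - c < (1 + (r - 1) * c) / r := by
      rw [lt_div_iff₀ (by linarith : (0:ℝ) < r)]
      nlinarith
    have : F c = r - 1 - c - g c := rfl
    linarith
  -- IVT
  have hsub : Icc (0:ℝ) c ⊆ Ico 0 1 := Icc_subset_Ico_right hc1
  have hivt := intermediate_value_Ioo' hc0.le (hF_cont.mono hsub)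
  have h0mem : (0:ℝ) ∈ Ioo (F c) (F 0) := ⟨hFc, by rw [hF0]; linarith⟩
  obtain ⟨t₂, ht₂mem, ht₂eq⟩ := hivt h0mem
  have ht₂Ioo : t₂ ∈ Ioo (0:ℝ) 1 := ⟨ht₂mem.1, lt_trans ht₂mem.2 hc1⟩
  have ht₂Ico : t₂ ∈ Ico (0:ℝ) 1 := ⟨ht₂Ioo.1.le, ht₂Ioo.2⟩
  have hFt₂ : r - 1 - t₂ - g t₂ = 0 := ht₂eq
  have hgt₂ : 1 < g t₂ := by
    have := hg_mono (show (0:ℝ) ∈ Ico (0:ℝ) 1 by constructor <;> norm_num)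
      ht₂Ico ht₂Ioo.1
    rwa [hg0] at this
  refine ⟨t₂, ht₂Ioo, by linarith, by linarith, ?_⟩
  intro t htIoo hteq
  have htIco : t ∈ Ico (0:ℝ) 1 := ⟨htIoo.1.le, htIoo.2⟩
  have hFt : F t = 0 := by
    have : r - 1 - t - g t = 0 := by
      have : g t = (1 + t) ^ (r - 1) * (1 - t) / (1 - t ^ r) := rfl
      linarith
    exact this
  exact hF_anti.injOn htIco ht₂Ico (by rw [hFt]; exact ht₂eq.symm)
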